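/- Let T, S ∈ Im ℍ be purely imaginary quaternions with ‖T‖ = 1, and let r, l ∈ ℝ with (r, l) ≠ (0, 0). Then −r + l·T ≠ 0 and (T·S − S·T)·(−r + l·T)⁻¹ = (2/(r² + l²))·(T × (l·(T × S) − r·S)), where for purely imaginary quaternions p, q the cross product is p × q = (1/2)·(p·q − q·p). (This identifies the continuum limit of the Darboux transformation with the evolution equation T' = (2/(r²+l²))·T × (lT×S − rS).) -/

import Mathlib

set_option maxHeartbeats 2000000

open Quaternion

noncomputable def qcross (p q : ℍ[ℝ]) : ℍ[ℝ] :=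
  (2 : ℝ)⁻¹ • (p * q - q * p)

theorem darboux_continuum_limit
    (T S : ℍ[ℝ]) (hT : T.re = 0) (hS : S.re = 0) (hTnorm : ‖T‖ = 1)
    (r l : ℝ) (hrl : (r, l) ≠ (0, 0)) :
    -(r : ℍ[ℝ]) + l • T ≠ 0 ∧
      (T * S - S * T) * (-(r : ℍ[ℝ]) + l • T)⁻¹ =
        (2 / (r ^ 2 + l ^ 2)) • qcross T (l • qcross T S - r • S) := by
  have hn : T.imI ^ 2 + T.imJ ^ 2 + T.imK ^ 2 = 1 := by
    have h1 : normSq T = 1 := by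
      rw [Quaternion.normSq_eq_norm_mul_self, hTnorm]; ring
    have := h1
    rw [Quaternion.normSq_def'] at this
    rw [hT] at this
    linarith [this]
  have hrl2 : r ^ 2 + l ^ 2 ≠ 0 := by
    rcases (Prod.mk.injEq .. ▸ hrl : ¬(r = 0 ∧ l = 0)) with h
    rcases eq_or_ne r 0 with hr | hr
    · have hl : l ≠ 0 := fun hl => h ⟨hr, hl⟩
      positivity
    · positivity
  have hx : -(r : ℍ[ℝ]) + l • T ≠ 0 := by
    intro h
    have := congrArg QuaternionAlgebra.re h
    have h2 := congrArg QuaternionAlgebra.imI h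
    have h3 := congrArg QuaternionAlgebra.imJ h
    have h4 := congrArg QuaternionAlgebra.imK h
    simp [hT] at this h2 h3 h4
    apply hrl2
    rcases h2 with h2 | h2 <;> rcases h3 with h3 | h3 <;> rcases h4 with h4 | h4 <;>
      first
      | (rw [this, h2]; ring)
      | (nlinarith [this, hn, h2, h3, h4])
  refine ⟨hx, ?_⟩
  have hns : Quaternion.normSq (-(r : ℍ[ℝ]) + l • T) = r ^ 2 + l ^ 2 := by
    rw [Quaternion.normSq_def']
    simp [hT, Quaternion.re_smul]
    ring_nf
    nlinarith [hn]
  rw [Quaternion.inv_def, hns]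
  simp only [qcross]
  ext <;>
    simp only [Quaternion.re_mul, Quaternion.imI_mul, Quaternion.imJ_mul, Quaternion.imK_mul,
      Quaternion.re_coe, Quaternion.imI_coe, Quaternion.imJ_coe, Quaternion.imK_coe,
      Quaternion.re_smul, Quaternion.imI_smul, Quaternion.imJ_smul, Quaternion.imK_smul,
      Quaternion.re_add, Quaternion.imI_add, Quaternion.imJ_add, Quaternion.imK_add,
      Quaternion.re_sub, Quaternion.imI_sub, Quaternion.imJ_sub, Quaternion.imK_sub,
      Quaternion.re_neg, Quaternion.imI_neg, Quaternion.imJ_neg, Quaternion.imK_neg,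
      Quaternion.re_star, Quaternion.imI_star, Quaternion.imJ_star, Quaternion.imK_star,
      smul_eq_mul, hT, hS] <;>
    field_simp <;>
    nlinarith [hn, sq_nonneg r, sq_nonneg l]
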